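/- Deterministic NPG regret framework (Lemma 7 of the paper, before taking expectation over the algorithm's randomness): Assume the parametrized policy class satisfies, for all θ, θ₁, θ₂ and all (s,a): ‖∇_θ log π_θ(a|s)‖₂ ≤ G and ‖∇_θ log π_{θ₁}(a|s) − ∇_θ log π_{θ₂}(a|s)‖₂ ≤ M‖θ₁−θ₂‖₂. Let π⋆ be any policy, η > 0, K ≥ 1, and let θ^0,…,θ^K ∈ ℝ^d, λ^0,…,λ^{K−1} ∈ ℝ^I with λ^k_i ≥ 0, and ω^0,…,ω^{K−1}, ω_*^0,…,ω_*^{K−1} ∈ ℝ^d be sequences with θ^{k+1} = θ^k + η ω^k for every k. Suppose the transferred function approximation error satisfies, for every k, ∑_s d_ρ^{π⋆}(s) ∑_a π⋆(a|s) ( (1−γ)∇_θ log π_{θ^k}(a|s)·ω_*^k − A_{L,λ^k}^{π_{θ^k}}(s,a) )² ≤ ε_bias. Then (1/K) ∑_{k=0}^{K−1} ( J_L(π⋆,λ^k) − J_L(π_{θ^k},λ^k) ) ≤ √ε_bias/(1−γ) + (Mη/(2K)) ∑_{k=0}^{K−1} ‖ω^k‖₂² + (G/K) ∑_{k=0}^{K−1}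 ‖ω^k − ω_*^k‖₂ + (1/(ηK)) ∑_s d_ρ^{π⋆}(s) ( KL(π⋆(·|s) ‖ π_{θ^0}(·|s)) − KL(π⋆(·|s) ‖ π_{θ^K}(·|s)) ). -/

import Mathlib

open scoped BigOperators
open Matrix

noncomputable section

/-- State-transition matrix `P_π(s,s') = ∑_a π(a|s) P(s'|s,a)` induced by policy `π`. -/
def Pmat {S A : Type*} [Fintype A] (P : S → A → S → ℝ) (π : S → A → ℝ) : Matrix S S ℝ :=
  Matrix.of fun s s' => ∑ a, π s a * P s a s'

/-- Discounted state-action occupancy measure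
`d_ρ^π(s,a) = (1-γ) ∑ₜ γ^t (ρᵀ P_π^t)(s) π(a|s)`. -/
def occupancy {S A : Type*} [Fintype S] [DecidableEq S] [Fintype A]
    (P : S → A → S → ℝ) (γ : ℝ) (ρ : S → ℝ) (π : S → A → ℝ) (s : S) (a : A) : ℝ :=
  (1 - γ) * (∑' t : ℕ, γ ^ t * Matrix.vecMul ρ (Pmat P π ^ t) s) * π s a

/-- Value vector `V_h^π = ∑ₜ γ^t P_π^t h_π` where `h_π(s) = ∑_a π(a|s) h(s,a)`. -/
def Vvec {S A : Type*} [Fintype S] [DecidableEq S] [Fintype A]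
    (P : S → A → S → ℝ) (γ : ℝ) (h : S → A → ℝ) (π : S → A → ℝ) : S → ℝ :=
  ∑' t : ℕ, γ ^ t • (Pmat P π ^ t).mulVec (fun s => ∑ a, π s a * h s a)

/-- Scalar value `J_h(π) = ∑_s ρ(s) V_h^π(s)`. -/
def Jval {S A : Type*} [Fintype S] [DecidableEq S] [Fintype A]
    (P : S → A → S → ℝ) (γ : ℝ) (ρ : S → ℝ) (h : S → A → ℝ) (π : S → A → ℝ) : ℝ :=
  ∑ s, ρ s * Vvec P γ h π s

/-- State-action value `Q_h^π(s,a) = h(s,a) + γ ∑_{s'} P(s'|s,a) V_h^π(s')`. -/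
def Qfun {S A : Type*} [Fintype S] [DecidableEq S] [Fintype A]
    (P : S → A → S → ℝ) (γ : ℝ) (h : S → A → ℝ) (π : S → A → ℝ) (s : S) (a : A) : ℝ :=
  h s a + γ * ∑ s', P s a s' * Vvec P γ h π s'

/-- Advantage `A_h^π(s,a) = Q_h^π(s,a) - V_h^π(s)`. -/
def Afun {S A : Type*} [Fintype S] [DecidableEq S] [Fintype A]
    (P : S → A → S → ℝ) (γ : ℝ) (h : S → A → ℝ) (π : S → A → ℝ) (s : S) (a : A) : ℝ :=
  Qfun P γ h π s a - Vvec P γ h π s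

/-- Gradient of the log-policy (score function) at parameter `θ`. -/
def gradLog {S A : Type*} {d : ℕ} (pc : EuclideanSpace ℝ (Fin d) → S → A → ℝ)
    (θ : EuclideanSpace ℝ (Fin d)) (s : S) (a : A) : EuclideanSpace ℝ (Fin d) :=
  gradient (fun θ' => Real.log (pc θ' s a)) θ

/-- State occupancy `d_ρ^π(s) = ∑_a d_ρ^π(s,a)`. -/
def dstate {S A : Type*} [Fintype S] [DecidableEq S] [Fintype A]
    (P : S → A → S → ℝ) (γ : ℝ) (ρ : S → ℝ) (π : S → A → ℝ) (s : S) : ℝ :=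
  ∑ a, occupancy P γ ρ π s a

/-- Lagrangian value `J_L(π,λ) = J_r(π) + ∑ᵢ λᵢ J_{gⁱ}(π)`. -/
def JLag {S A : Type*} [Fintype S] [DecidableEq S] [Fintype A] {I : ℕ}
    (P : S → A → S → ℝ) (γ : ℝ) (ρ : S → ℝ) (r : S → A → ℝ) (g : Fin I → S → A → ℝ)
    (lam : Fin I → ℝ) (π : S → A → ℝ) : ℝ :=
  Jval P γ ρ r π + ∑ i, lam i * Jval P γ ρ (g i) π

/-- Lagrangian advantage `A_{L,λ}^π = A_r^π + ∑ᵢ λᵢ A_{gⁱ}^π`. -/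
def ALag {S A : Type*} [Fintype S] [DecidableEq S] [Fintype A] {I : ℕ}
    (P : S → A → S → ℝ) (γ : ℝ) (r : S → A → ℝ) (g : Fin I → S → A → ℝ)
    (lam : Fin I → ℝ) (π : S → A → ℝ) (s : S) (a : A) : ℝ :=
  Afun P γ r π s a + ∑ i, lam i * Afun P γ (g i) π s a

/-- Kullback–Leibler divergence `KL(p‖q) = ∑_a p(a) log (p(a)/q(a))`. -/
def KLdiv {A : Type*} [Fintype A] (p q : A → ℝ) : ℝ :=
  ∑ a, p a * Real.log (p a / q a)


namespace NPGaux

set_option linter.unusedSectionVars false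

variable {S : Type*} [Fintype S] [DecidableEq S]

/-- Row-stochastic with nonnegative entries. -/
def Stoch (Q : Matrix S S ℝ) : Prop := (∀ s s', 0 ≤ Q s s') ∧ (∀ s, ∑ s', Q s s' = 1)

lemma Stoch.mul {Q R : Matrix S S ℝ} (hQ : Stoch Q) (hR : Stoch R) : Stoch (Q * R) := by
  constructor
  · intro s s'
    exact Finset.sum_nonneg fun j _ => mul_nonneg (hQ.1 s j) (hR.1 j s')
  · intro s
    simp only [Matrix.mul_apply]
    rw [Finset.sum_comm]
    simp_rw [← Finset.mul_sum, hR.2]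
    simpa using hQ.2 s

lemma Stoch.pow {Q : Matrix S S ℝ} (hQ : Stoch Q) (t : ℕ) : Stoch (Q ^ t) := by
  induction t with
  | zero =>
    constructor
    · intro s s'; simp [Matrix.one_apply]; positivity
    · intro s; simp [Matrix.one_apply, Finset.sum_ite_eq']
  | succ n ih => rw [pow_succ]; exact ih.mul hQ

lemma Stoch.abs_mulVec_le {Q : Matrix S S ℝ} (hQ : Stoch Q) (u : S → ℝ) (s : S) :
    |Q.mulVec u s| ≤ ‖u‖ := by
  have h1 : |Q.mulVec u s| ≤ ∑ s', Q s s' * |u s'| := by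
    refine (Finset.abs_sum_le_sum_abs _ _).trans ?_
    refine Finset.sum_le_sum fun s' _ => ?_
    rw [abs_mul, abs_of_nonneg (hQ.1 s s')]
  refine h1.trans ?_
  calc ∑ s', Q s s' * |u s'| ≤ ∑ s', Q s s' * ‖u‖ := by
        refine Finset.sum_le_sum fun s' _ => ?_
        exact mul_le_mul_of_nonneg_left ((Real.norm_eq_abs _ ▸ norm_le_pi_norm u s')) (hQ.1 s s')
    _ = ‖u‖ := by rw [← Finset.sum_mul, hQ.2, one_mul]

lemma Stoch.norm_mulVec_le {Q : Matrix S S ℝ} (hQ : Stoch Q) (u : S → ℝ) :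
    ‖Q.mulVec u‖ ≤ ‖u‖ := by
  rw [pi_norm_le_iff_of_nonneg (norm_nonneg u)]
  intro s
  simpa [Real.norm_eq_abs] using hQ.abs_mulVec_le u s

variable {Q : Matrix S S ℝ} {γ : ℝ} {ρ : S → ℝ}

lemma summable_geom (hQ : Stoch Q) (hγ0 : 0 ≤ γ) (hγ1 : γ < 1) (u : S → ℝ) :
    Summable (fun t : ℕ => γ ^ t • (Q ^ t).mulVec u) := by
  refine Summable.of_norm_bounded (g := fun t => γ ^ t * ‖u‖)
    ((summable_geometric_of_lt_one hγ0 hγ1).mul_right _) fun t => ?_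
  rw [norm_smul, Real.norm_eq_abs, abs_pow, abs_of_nonneg hγ0]
  exact mul_le_mul_of_nonneg_left ((hQ.pow t).norm_mulVec_le u) (by positivity)

lemma tsum_geom_fixed (hQ : Stoch Q) (hγ0 : 0 ≤ γ) (hγ1 : γ < 1) (u : S → ℝ) :
    (∑' t : ℕ, γ ^ t • (Q ^ t).mulVec u)
      = u + γ • Q.mulVec (∑' t : ℕ, γ ^ t • (Q ^ t).mulVec u) := by
  have hs := summable_geom hQ hγ0 hγ1 u
  set L : (S → ℝ) →L[ℝ] (S → ℝ) := LinearMap.toContinuousLinearMap Q.mulVecLin with hL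
  have hLapp : ∀ v, L v = Q.mulVec v := fun v => rfl
  have step : ∀ t : ℕ, γ ^ (t + 1) • (Q ^ (t + 1)).mulVec u
      = γ • L (γ ^ t • (Q ^ t).mulVec u) := by
    intro t
    rw [hLapp, pow_succ' Q, ← Matrix.mulVec_mulVec, pow_succ γ,
      mul_comm (γ ^ t) γ, mul_smul]
    congr 1
    rw [Matrix.mulVec_smul]
  have hsum2 : Summable fun t : ℕ => L (γ ^ t • (Q ^ t).mulVec u) :=
    hs.map L.toLinearMap.toAddMonoidHom L.continuous
  have key : (∑' t : ℕ, γ ^ (t + 1) • (Q ^ (t + 1)).mulVec u)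
      = γ • Q.mulVec (∑' t : ℕ, γ ^ t • (Q ^ t).mulVec u) := by
    calc (∑' t : ℕ, γ ^ (t + 1) • (Q ^ (t + 1)).mulVec u)
        = ∑' t : ℕ, γ • L (γ ^ t • (Q ^ t).mulVec u) := by simp_rw [step]
      _ = γ • ∑' t : ℕ, L (γ ^ t • (Q ^ t).mulVec u) := Summable.tsum_const_smul _ hsum2
      _ = γ • L (∑' t : ℕ, γ ^ t • (Q ^ t).mulVec u) := by rw [← L.map_tsum hs]
      _ = γ • Q.mulVec (∑' t : ℕ, γ ^ t • (Q ^ t).mulVec u) := by rw [hLapp]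
  calc (∑' t : ℕ, γ ^ t • (Q ^ t).mulVec u)
      = γ ^ 0 • (Q ^ 0).mulVec u + ∑' t : ℕ, γ ^ (t + 1) • (Q ^ (t + 1)).mulVec u :=
        Summable.tsum_eq_zero_add hs
    _ = u + γ • Q.mulVec (∑' t : ℕ, γ ^ t • (Q ^ t).mulVec u) := by rw [key]; simp

lemma fixed_unique (hQ : Stoch Q) (hγ0 : 0 ≤ γ) (hγ1 : γ < 1) {b x y : S → ℝ}
    (hx : x = b + γ • Q.mulVec x) (hy : y = b + γ • Q.mulVec y) : x = y := by
  have hxy : x - y = γ • Q.mulVec (x - y) := by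
    rw [Matrix.mulVec_sub, smul_sub]
    calc x - y = (b + γ • Q.mulVec x) - (b + γ • Q.mulVec y) := by rw [← hx, ← hy]
      _ = γ • Q.mulVec x - γ • Q.mulVec y := by abel
  have hn : ‖x - y‖ ≤ γ * ‖x - y‖ := by
    calc ‖x - y‖ = ‖γ • Q.mulVec (x - y)‖ := by rw [← hxy]
      _ = γ * ‖Q.mulVec (x - y)‖ := by rw [norm_smul, Real.norm_eq_abs, abs_of_nonneg hγ0]
      _ ≤ γ * ‖x - y‖ := mul_le_mul_of_nonneg_left (hQ.norm_mulVec_le _) hγ0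
  have h0 : ‖x - y‖ = 0 := by nlinarith [norm_nonneg (x - y)]
  exact sub_eq_zero.mp (norm_eq_zero.mp h0)

lemma vecMul_nonneg (hQ : Stoch Q) (hρ0 : ∀ s, 0 ≤ ρ s) (s : S) :
    0 ≤ Matrix.vecMul ρ Q s :=
  Finset.sum_nonneg fun j _ => mul_nonneg (hρ0 j) (hQ.1 j s)

lemma sum_vecMul_eq (hQ : Stoch Q) : ∑ s, Matrix.vecMul ρ Q s = ∑ s, ρ s := by
  unfold Matrix.vecMul dotProduct
  rw [Finset.sum_comm]
  simp_rw [← Finset.mul_sum, hQ.2, mul_one]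

lemma vecMul_le_one (hQ : Stoch Q) (hρ0 : ∀ s, 0 ≤ ρ s) (hρ1 : ∑ s, ρ s = 1) (s : S) :
    Matrix.vecMul ρ Q s ≤ 1 := by
  have h := Finset.single_le_sum (f := fun s' => Matrix.vecMul ρ Q s')
    (fun s' _ => vecMul_nonneg hQ hρ0 s') (Finset.mem_univ s)
  rw [sum_vecMul_eq hQ, hρ1] at h
  exact h

lemma summable_c (hQ : Stoch Q) (hγ0 : 0 ≤ γ) (hγ1 : γ < 1)
    (hρ0 : ∀ s, 0 ≤ ρ s) (hρ1 : ∑ s, ρ s = 1) (s : S) :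
    Summable (fun t : ℕ => γ ^ t * Matrix.vecMul ρ (Q ^ t) s) := by
  refine Summable.of_nonneg_of_le (fun t => ?_) (fun t => ?_)
    (summable_geometric_of_lt_one hγ0 hγ1)
  · exact mul_nonneg (by positivity) (vecMul_nonneg (hQ.pow t) hρ0 s)
  · calc γ ^ t * Matrix.vecMul ρ (Q ^ t) s ≤ γ ^ t * 1 :=
        mul_le_mul_of_nonneg_left (vecMul_le_one (hQ.pow t) hρ0 hρ1 s) (by positivity)
      _ = γ ^ t := mul_one _

lemma sum_c_eq (hQ : Stoch Q) (hγ0 : 0 ≤ γ) (hγ1 : γ < 1)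
    (hρ0 : ∀ s, 0 ≤ ρ s) (hρ1 : ∑ s, ρ s = 1) :
    ∑ s, (∑' t : ℕ, γ ^ t * Matrix.vecMul ρ (Q ^ t) s) = (1 - γ)⁻¹ := by
  rw [← Summable.tsum_finsetSum (fun s _ => summable_c hQ hγ0 hγ1 hρ0 hρ1 s)]
  have : ∀ t : ℕ, (∑ s, γ ^ t * Matrix.vecMul ρ (Q ^ t) s) = γ ^ t := by
    intro t
    rw [← Finset.mul_sum, sum_vecMul_eq (hQ.pow t), hρ1, mul_one]
  simp_rw [this]
  exact tsum_geometric_of_lt_one hγ0 hγ1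

lemma c_nonneg (hQ : Stoch Q) (hγ0 : 0 ≤ γ) (hρ0 : ∀ s, 0 ≤ ρ s) (s : S) :
    0 ≤ ∑' t : ℕ, γ ^ t * Matrix.vecMul ρ (Q ^ t) s :=
  tsum_nonneg fun t => mul_nonneg (by positivity) (vecMul_nonneg (hQ.pow t) hρ0 s)

lemma summable_coord (hQ : Stoch Q) (hγ0 : 0 ≤ γ) (hγ1 : γ < 1) (u : S → ℝ) (s : S) :
    Summable (fun t : ℕ => γ ^ t * (Q ^ t).mulVec u s) := by
  refine Summable.of_norm_bounded (g := fun t => γ ^ t * ‖u‖)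
    ((summable_geometric_of_lt_one hγ0 hγ1).mul_right _) fun t => ?_
  rw [Real.norm_eq_abs, abs_mul, abs_pow, abs_of_nonneg hγ0]
  exact mul_le_mul_of_nonneg_left ((hQ.pow t).abs_mulVec_le u s) (by positivity)

lemma tsum_coord (hQ : Stoch Q) (hγ0 : 0 ≤ γ) (hγ1 : γ < 1) (u : S → ℝ) (s : S) :
    (∑' t : ℕ, γ ^ t • (Q ^ t).mulVec u) s = ∑' t : ℕ, γ ^ t * (Q ^ t).mulVec u s := by
  rw [tsum_apply (summable_geom hQ hγ0 hγ1 u)]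
  rfl

lemma rho_dot_tsum (hQ : Stoch Q) (hγ0 : 0 ≤ γ) (hγ1 : γ < 1)
    (hρ0 : ∀ s, 0 ≤ ρ s) (hρ1 : ∑ s, ρ s = 1) (b : S → ℝ) :
    ∑ s, ρ s * (∑' t : ℕ, γ ^ t • (Q ^ t).mulVec b) s
      = ∑ s, (∑' t : ℕ, γ ^ t * Matrix.vecMul ρ (Q ^ t) s) * b s := by
  have h1 : ∀ s, ρ s * (∑' t : ℕ, γ ^ t • (Q ^ t).mulVec b) s
      = ∑' t : ℕ, ρ s * (γ ^ t * (Q ^ t).mulVec b s) := by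
    intro s
    rw [tsum_coord hQ hγ0 hγ1 b s, Summable.tsum_mul_left _ (summable_coord hQ hγ0 hγ1 b s)]
  simp_rw [h1]
  rw [← Summable.tsum_finsetSum (fun s _ => Summable.mul_left _ (summable_coord hQ hγ0 hγ1 b s))]
  have h2 : ∀ t : ℕ, (∑ s, ρ s * (γ ^ t * (Q ^ t).mulVec b s))
      = ∑ s, (γ ^ t * Matrix.vecMul ρ (Q ^ t) s) * b s := by
    intro t
    have hd : dotProduct ρ ((Q ^ t).mulVec b)
        = dotProduct (Matrix.vecMul ρ (Q ^ t)) b := dotProduct_mulVec ρ _ b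
    unfold dotProduct at hd
    calc (∑ s, ρ s * (γ ^ t * (Q ^ t).mulVec b s))
        = γ ^ t * ∑ s, ρ s * (Q ^ t).mulVec b s := by
          rw [Finset.mul_sum]; congr 1; funext s; ring
      _ = γ ^ t * ∑ s, Matrix.vecMul ρ (Q ^ t) s * b s := by rw [hd]
      _ = ∑ s, (γ ^ t * Matrix.vecMul ρ (Q ^ t) s) * b s := by
          rw [Finset.mul_sum]; congr 1; funext s; ring
  simp_rw [h2]
  rw [Summable.tsum_finsetSum (fun s _ => ?_)]
  · congr 1; funext s
    rw [← tsum_mul_right]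
  · exact Summable.mul_right _ (summable_c hQ hγ0 hγ1 hρ0 hρ1 s)

section MDP

variable {S A : Type*} [Fintype S] [DecidableEq S] [Fintype A]
variable {P : S → A → S → ℝ} {γ : ℝ} {ρ : S → ℝ} {π : S → A → ℝ}

lemma stoch_Pmat (hP0 : ∀ s a s', 0 ≤ P s a s') (hP1 : ∀ s a, ∑ s', P s a s' = 1)
    (hπ0 : ∀ s a, 0 ≤ π s a) (hπ1 : ∀ s, ∑ a, π s a = 1) : Stoch (Pmat P π) := by
  constructor
  · intro s s'
    exact Finset.sum_nonneg fun a _ => mul_nonneg (hπ0 s a) (hP0 s a s')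
  · intro s
    show ∑ s', ∑ a, π s a * P s a s' = 1
    rw [Finset.sum_comm]
    simp_rw [← Finset.mul_sum, hP1, mul_one]
    exact hπ1 s

lemma bellman (hP0 : ∀ s a s', 0 ≤ P s a s') (hP1 : ∀ s a, ∑ s', P s a s' = 1)
    (hγ0 : 0 ≤ γ) (hγ1 : γ < 1)
    (hπ0 : ∀ s a, 0 ≤ π s a) (hπ1 : ∀ s, ∑ a, π s a = 1) (h : S → A → ℝ) :
    Vvec P γ h π = (fun s => ∑ a, π s a * h s a)
      + γ • (Pmat P π).mulVec (Vvec P γ h π) :=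
  tsum_geom_fixed (stoch_Pmat hP0 hP1 hπ0 hπ1) hγ0 hγ1 _

lemma Pmat_mulVec (π' : S → A → ℝ) (v : S → ℝ) (s : S) :
    (Pmat P π').mulVec v s = ∑ a, π' s a * ∑ s', P s a s' * v s' := by
  show ∑ s', (∑ a, π' s a * P s a s') * v s' = _
  simp_rw [Finset.sum_mul, mul_assoc]
  rw [Finset.sum_comm]
  simp_rw [← Finset.mul_sum]

lemma dstate_eq {π' : S → A → ℝ} (hπ'1 : ∀ s, ∑ a, π' s a = 1) (s : S) :
    dstate P γ ρ π' s
      = (1 - γ) * (∑' t : ℕ, γ ^ t * Matrix.vecMul ρ ((Pmat P π') ^ t) s) := by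
  unfold dstate occupancy
  rw [← Finset.mul_sum, hπ'1, mul_one]

lemma dstate_nonneg (hP0 : ∀ s a s', 0 ≤ P s a s') (hP1 : ∀ s a, ∑ s', P s a s' = 1)
    (hγ0 : 0 ≤ γ) (hγ1 : γ ≤ 1) (hρ0 : ∀ s, 0 ≤ ρ s)
    {π' : S → A → ℝ} (hπ'0 : ∀ s a, 0 ≤ π' s a) (hπ'1 : ∀ s, ∑ a, π' s a = 1) (s : S) :
    0 ≤ dstate P γ ρ π' s := by
  rw [dstate_eq hπ'1 s]
  exact mul_nonneg (by linarith)
    (c_nonneg (stoch_Pmat hP0 hP1 hπ'0 hπ'1) hγ0 hρ0 s)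

lemma sum_dstate (hP0 : ∀ s a s', 0 ≤ P s a s') (hP1 : ∀ s a, ∑ s', P s a s' = 1)
    (hγ0 : 0 ≤ γ) (hγ1 : γ < 1) (hρ0 : ∀ s, 0 ≤ ρ s) (hρ1 : ∑ s, ρ s = 1)
    {π' : S → A → ℝ} (hπ'0 : ∀ s a, 0 ≤ π' s a) (hπ'1 : ∀ s, ∑ a, π' s a = 1) :
    ∑ s, dstate P γ ρ π' s = 1 := by
  have := sum_c_eq (ρ := ρ) (stoch_Pmat hP0 hP1 hπ'0 hπ'1) hγ0 hγ1 hρ0 hρ1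
  simp_rw [dstate_eq hπ'1]
  rw [← Finset.mul_sum, this]
  have hne : (1 : ℝ) - γ ≠ 0 := by linarith
  field_simp

/-- Performance difference lemma. -/
lemma pdl (hP0 : ∀ s a s', 0 ≤ P s a s') (hP1 : ∀ s a, ∑ s', P s a s' = 1)
    (hγ0 : 0 < γ) (hγ1 : γ < 1)
    (hρ0 : ∀ s, 0 ≤ ρ s) (hρ1 : ∑ s, ρ s = 1)
    {π' : S → A → ℝ} (hπ'0 : ∀ s a, 0 ≤ π' s a) (hπ'1 : ∀ s, ∑ a, π' s a = 1)
    (h : S → A → ℝ) :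
    Jval P γ ρ h π' - Jval P γ ρ h π
      = (1 - γ)⁻¹ * ∑ s, dstate P γ ρ π' s * ∑ a, π' s a * Afun P γ h π s a := by
  have hQ : Stoch (Pmat P π') := stoch_Pmat hP0 hP1 hπ'0 hπ'1
  set V := Vvec P γ h π with hV
  set V' := Vvec P γ h π' with hV'
  set b : S → ℝ := fun s => ∑ a, π' s a * Afun P γ h π s a with hb
  set hpi : S → ℝ := fun s => ∑ a, π' s a * h s a with hhpi
  have hbform : b = hpi + γ • (Pmat P π').mulVec V - V := by
    funext s
    show ∑ a, π' s a * Afun P γ h π s a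
      = hpi s + γ * (Pmat P π').mulVec V s - V s
    rw [Pmat_mulVec]
    have e1 : ∀ a ∈ Finset.univ (α := A), π' s a * Afun P γ h π s a
        = π' s a * h s a + γ * (π' s a * ∑ s', P s a s' * V s') - π' s a * V s := by
      intro a _
      unfold Afun Qfun
      rw [← hV]
      ring
    rw [Finset.sum_congr rfl e1, Finset.sum_sub_distrib, Finset.sum_add_distrib,
      ← Finset.mul_sum, ← Finset.sum_mul, hπ'1, one_mul]
  have hbell : V' = hpi + γ • (Pmat P π').mulVec V' :=
    bellman hP0 hP1 hγ0.le hγ1 hπ'0 hπ'1 h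
  have hfp1 : V' - V = b + γ • (Pmat P π').mulVec (V' - V) := by
    calc V' - V = (hpi + γ • (Pmat P π').mulVec V') - V := by rw [← hbell]
      _ = b + γ • (Pmat P π').mulVec (V' - V) := by
          rw [hbform, Matrix.mulVec_sub, smul_sub]; abel
  set T : S → ℝ := ∑' t : ℕ, γ ^ t • ((Pmat P π') ^ t).mulVec b with hT
  have hfp2 : T = b + γ • (Pmat P π').mulVec T := tsum_geom_fixed hQ hγ0.le hγ1 b
  have hVT : V' - V = T := fixed_unique hQ hγ0.le hγ1 hfp1 hfp2
  have hJ : Jval P γ ρ h π' - Jval P γ ρ h π = ∑ s, ρ s * (V' - V) s := by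
    unfold Jval
    rw [← Finset.sum_sub_distrib]
    congr 1; funext s
    rw [← hV, ← hV', Pi.sub_apply]
    ring
  rw [hJ, hVT, hT, rho_dot_tsum hQ hγ0.le hγ1 hρ0 hρ1 b]
  rw [Finset.mul_sum]
  congr 1; funext s
  rw [dstate_eq hπ'1 s, hb]
  have hne : (1 : ℝ) - γ ≠ 0 := by linarith
  field_simp

end MDP

section Analysis

open scoped RealInnerProductSpace

variable {E : Type*} [NormedAddCommGroup E] [InnerProductSpace ℝ E] [CompleteSpace E]

lemma inner_gradient_eq_fderiv (f : E → ℝ) (hf : Differentiable ℝ f) (x v : E) :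
    ⟪gradient f x, v⟫ = fderiv ℝ f x v := by
  have h := (hf x).hasGradientAt
  have h2 := h.hasFDerivAt
  rw [h2.fderiv]
  simp [InnerProductSpace.toDual_apply_apply]

lemma hasDerivAt_line (f : E → ℝ) (hf : Differentiable ℝ f) (θ v : E) (t : ℝ) :
    HasDerivAt (fun t : ℝ => f (θ + t • v)) ⟪gradient f (θ + t • v), v⟫ t := by
  have hline : HasDerivAt (fun t : ℝ => θ + t • v) v t := by
    simpa using ((hasDerivAt_id t).smul_const v).const_add θ
  have := (hf (θ + t • v)).hasFDerivAt.comp_hasDerivAt t hline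
  rwa [inner_gradient_eq_fderiv f hf]

/-- Descent lemma: a lower quadratic bound from a Lipschitz gradient. -/
lemma inner_grad_le (f : E → ℝ) (hf : Differentiable ℝ f) (M : ℝ)
    (hL : ∀ x y, ‖gradient f x - gradient f y‖ ≤ M * ‖x - y‖) (θ v : E) :
    ⟪gradient f θ, v⟫ ≤ f (θ + v) - f θ + M / 2 * ‖v‖ ^ 2 := by
  set φ : ℝ → ℝ := fun t => M / 2 * t ^ 2 * ‖v‖ ^ 2 + (f (θ + t • v) - t * ⟪gradient f θ, v⟫)
  have hgd : ∀ t : ℝ, HasDerivAt φ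
      (M * t * ‖v‖ ^ 2 + (⟪gradient f (θ + t • v), v⟫ - ⟪gradient f θ, v⟫)) t := by
    intro t
    have h1 : HasDerivAt (fun t : ℝ => M / 2 * t ^ 2 * ‖v‖ ^ 2) (M * t * ‖v‖ ^ 2) t := by
      have := ((hasDerivAt_pow 2 t).const_mul (M / 2)).mul_const (‖v‖ ^ 2)
      exact this.congr_deriv (by rw [show (2:ℕ) - 1 = 1 from rfl]; push_cast; ring)
    have h2 : HasDerivAt (fun t : ℝ => f (θ + t • v) - t * ⟪gradient f θ, v⟫)
        (⟪gradient f (θ + t • v), v⟫ - ⟪gradient f θ, v⟫) t := by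
      have := (hasDerivAt_line f hf θ v t).sub
        ((hasDerivAt_id t).mul_const (⟪gradient f θ, v⟫ : ℝ))
      exact this.congr_deriv (by rw [one_mul])
    exact h1.add h2
  have hmono : MonotoneOn φ (Set.Icc (0 : ℝ) 1) := by
    refine monotoneOn_of_deriv_nonneg (convex_Icc 0 1)
      (fun t _ => ((hgd t).continuousAt).continuousWithinAt)
      (fun t _ => ((hgd t).differentiableAt).differentiableWithinAt) ?_
    intro t ht
    rw [interior_Icc] at ht
    rw [(hgd t).deriv]
    have hb : ⟪gradient f θ - gradient f (θ + t • v), v⟫ ≤ M * t * ‖v‖ ^ 2 := by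
      calc ⟪gradient f θ - gradient f (θ + t • v), v⟫
          ≤ ‖gradient f θ - gradient f (θ + t • v)‖ * ‖v‖ := real_inner_le_norm _ _
        _ = ‖gradient f (θ + t • v) - gradient f θ‖ * ‖v‖ := by rw [norm_sub_rev]
        _ ≤ (M * ‖(θ + t • v) - θ‖) * ‖v‖ :=
            mul_le_mul_of_nonneg_right (hL _ _) (norm_nonneg v)
        _ = M * t * ‖v‖ ^ 2 := by
            rw [add_sub_cancel_left, norm_smul, Real.norm_eq_abs, abs_of_nonneg ht.1.le]
            ring
    rw [inner_sub_left] at hb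
    linarith
  have h01 := hmono (Set.left_mem_Icc.mpr zero_le_one) (Set.right_mem_Icc.mpr zero_le_one)
    zero_le_one
  simp only [φ] at h01
  simp only [zero_pow, one_pow, zero_smul, one_smul, add_zero, zero_mul, one_mul] at h01
  norm_num at h01
  rw [inner_gradient_eq_fderiv f hf]
  linarith

end Analysis

lemma KL_diff {A : Type*} [Fintype A] (p q q' : A → ℝ) (hp : ∀ a, 0 ≤ p a)
    (hq : ∀ a, 0 < q a) (hq' : ∀ a, 0 < q' a) :
    KLdiv p q - KLdiv p q' = ∑ a, p a * (Real.log (q' a) - Real.log (q a)) := by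
  unfold KLdiv
  rw [← Finset.sum_sub_distrib]
  congr 1; funext a
  rcases eq_or_lt_of_le (hp a) with h0 | hpa
  · rw [← h0]; ring
  · rw [Real.log_div (ne_of_gt hpa) (ne_of_gt (hq a)),
      Real.log_div (ne_of_gt hpa) (ne_of_gt (hq' a))]
    ring

lemma weighted_cs {ι : Type*} [Fintype ι] (w x : ι → ℝ) (hw0 : ∀ i, 0 ≤ w i)
    (hw1 : ∑ i, w i = 1) : ∑ i, w i * |x i| ≤ Real.sqrt (∑ i, w i * x i ^ 2) := by
  have key : (∑ i, w i * |x i|) ^ 2 ≤ ∑ i, w i * x i ^ 2 := by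
    have h := Finset.sum_mul_sq_le_sq_mul_sq Finset.univ
      (fun i => Real.sqrt (w i)) (fun i => Real.sqrt (w i) * |x i|)
    have e1 : ∀ i, Real.sqrt (w i) * (Real.sqrt (w i) * |x i|) = w i * |x i| := by
      intro i
      rw [← mul_assoc, Real.mul_self_sqrt (hw0 i)]
    have e2 : ∀ i, Real.sqrt (w i) ^ 2 = w i := fun i => Real.sq_sqrt (hw0 i)
    have e3 : ∀ i, (Real.sqrt (w i) * |x i|) ^ 2 = w i * x i ^ 2 := by
      intro i
      rw [mul_pow, Real.sq_sqrt (hw0 i), sq_abs]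
    simp_rw [e1, e2, e3, hw1, one_mul] at h
    exact h
  have hnn : 0 ≤ ∑ i, w i * |x i| :=
    Finset.sum_nonneg fun i _ => mul_nonneg (hw0 i) (abs_nonneg _)
  calc ∑ i, w i * |x i| = Real.sqrt ((∑ i, w i * |x i|) ^ 2) := (Real.sqrt_sq hnn).symm
    _ ≤ Real.sqrt (∑ i, w i * x i ^ 2) := Real.sqrt_le_sqrt key

end NPGaux


open scoped RealInnerProductSpace

/-- Lemma 7 of the paper, deterministic form. The NPG regret framework:
under the score bound `G` and score smoothness `M`, for iterates `θ^{k+1} = θ^k + η ω^k`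
with nonnegative multipliers `λ^k` and transferred function approximation error at most
`ε_bias`, the averaged Lagrangian regret against any comparator policy `π⋆` is bounded by
`√ε_bias/(1−γ) + (Mη/2K) ∑‖ω^k‖² + (G/K) ∑‖ω^k − ω_*^k‖ + (1/ηK) ∑_s d_ρ^{π⋆}(s)
(KL(π⋆‖π_{θ⁰}) − KL(π⋆‖π_{θᴷ}))`. -/
theorem stmt17 {S A : Type*} [Fintype S] [DecidableEq S] [Fintype A] [Nonempty S] [Nonempty A]
    {d I : ℕ}
    (P : S → A → S → ℝ) (hP0 : ∀ s a s', 0 ≤ P s a s') (hP1 : ∀ s a, ∑ s', P s a s' = 1)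
    (γ : ℝ) (hγ0 : 0 < γ) (hγ1 : γ < 1)
    (ρ : S → ℝ) (hρ0 : ∀ s, 0 ≤ ρ s) (hρ1 : ∑ s, ρ s = 1)
    (pc : EuclideanSpace ℝ (Fin d) → S → A → ℝ)
    (hpos : ∀ θ s a, 0 < pc θ s a) (hnorm : ∀ θ s, ∑ a, pc θ s a = 1)
    (hdiff : ∀ s a, Differentiable ℝ fun θ => Real.log (pc θ s a))
    (G M : ℝ)
    (hG : ∀ θ s a, ‖gradLog pc θ s a‖ ≤ G)
    (hM : ∀ θ₁ θ₂ s a, ‖gradLog pc θ₁ s a - gradLog pc θ₂ s a‖ ≤ M * ‖θ₁ - θ₂‖)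
    (r : S → A → ℝ) (hr : ∀ s a, r s a ∈ Set.Icc (0 : ℝ) 1)
    (g : Fin I → S → A → ℝ) (hg : ∀ i s a, g i s a ∈ Set.Icc (-1 : ℝ) 1)
    (πstar : S → A → ℝ) (hstar0 : ∀ s a, 0 ≤ πstar s a) (hstar1 : ∀ s, ∑ a, πstar s a = 1)
    (η : ℝ) (hη : 0 < η) (K : ℕ) (hK : 1 ≤ K)
    (θ : ℕ → EuclideanSpace ℝ (Fin d)) (lam : ℕ → Fin I → ℝ)
    (hlam : ∀ k, k < K → ∀ i, 0 ≤ lam k i)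
    (ω ωstar : ℕ → EuclideanSpace ℝ (Fin d))
    (hupd : ∀ k, k < K → θ (k + 1) = θ k + η • ω k)
    (εbias : ℝ)
    (hbias : ∀ k, k < K →
      ∑ s, dstate P γ ρ πstar s * ∑ a, πstar s a *
        ((1 - γ) * ⟪gradLog pc (θ k) s a, ωstar k⟫ -
          ALag P γ r g (lam k) (pc (θ k)) s a) ^ 2 ≤ εbias) :
    (1 / (K : ℝ)) * ∑ k ∈ Finset.range K,
        (JLag P γ ρ r g (lam k) πstar - JLag P γ ρ r g (lam k) (pc (θ k)))
      ≤ Real.sqrt εbias / (1 - γ)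
        + (M * η / (2 * (K : ℝ))) * ∑ k ∈ Finset.range K, ‖ω k‖ ^ 2
        + (G / (K : ℝ)) * ∑ k ∈ Finset.range K, ‖ω k - ωstar k‖
        + (1 / (η * (K : ℝ))) * ∑ s, dstate P γ ρ πstar s *
            (KLdiv (πstar s) (fun a => pc (θ 0) s a) -
             KLdiv (πstar s) (fun a => pc (θ K) s a)) := by
  classical
  have hγ' : (0:ℝ) < 1 - γ := by linarith
  have hKpos : (0:ℝ) < (K:ℝ) := by exact_mod_cast Nat.lt_of_lt_of_le Nat.zero_lt_one hK
  set D : S → ℝ := fun s => dstate P γ ρ πstar s with hDdef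
  have hD0 : ∀ s, 0 ≤ D s := fun s =>
    NPGaux.dstate_nonneg hP0 hP1 hγ0.le hγ1.le hρ0 hstar0 hstar1 s
  have hD1 : ∑ s, D s = 1 :=
    NPGaux.sum_dstate hP0 hP1 hγ0.le hγ1 hρ0 hρ1 hstar0 hstar1
  set F : ℕ → S → ℝ := fun k s => KLdiv (πstar s) (fun a => pc (θ k) s a) with hFdef
  -- Lagrangian performance-difference lemma
  have hpdlL : ∀ k : ℕ,
      JLag P γ ρ r g (lam k) πstar - JLag P γ ρ r g (lam k) (pc (θ k))
        = (1 - γ)⁻¹ * ∑ s, D s * ∑ a, πstar s a * ALag P γ r g (lam k) (pc (θ k)) s a := by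
    intro k
    have hr' := NPGaux.pdl (π := pc (θ k)) hP0 hP1 hγ0 hγ1 hρ0 hρ1 hstar0 hstar1 r
    have hg' : ∀ i : Fin I,
        Jval P γ ρ (g i) πstar - Jval P γ ρ (g i) (pc (θ k))
          = (1 - γ)⁻¹ * ∑ s, D s * ∑ a, πstar s a * Afun P γ (g i) (pc (θ k)) s a :=
      fun i => NPGaux.pdl (π := pc (θ k)) hP0 hP1 hγ0 hγ1 hρ0 hρ1 hstar0 hstar1 (g i)
    have swap : ∑ i, lam k i * ∑ s, D s * ∑ a, πstar s a * Afun P γ (g i) (pc (θ k)) s a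
        = ∑ s, D s * ∑ a, πstar s a * ∑ i, lam k i * Afun P γ (g i) (pc (θ k)) s a := by
      simp_rw [Finset.mul_sum]
      rw [Finset.sum_comm]
      refine Finset.sum_congr rfl fun s _ => ?_
      rw [Finset.sum_comm]
      refine Finset.sum_congr rfl fun a _ => ?_
      refine Finset.sum_congr rfl fun i _ => ?_
      ring
    have expand : ∀ s, (∑ a, πstar s a * ALag P γ r g (lam k) (pc (θ k)) s a)
        = (∑ a, πstar s a * Afun P γ r (pc (θ k)) s a)
          + ∑ a, πstar s a * ∑ i, lam k i * Afun P γ (g i) (pc (θ k)) s a := by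
      intro s
      rw [← Finset.sum_add_distrib]
      refine Finset.sum_congr rfl fun a _ => ?_
      unfold ALag
      ring
    calc JLag P γ ρ r g (lam k) πstar - JLag P γ ρ r g (lam k) (pc (θ k))
        = (Jval P γ ρ r πstar - Jval P γ ρ r (pc (θ k)))
          + ∑ i, lam k i * (Jval P γ ρ (g i) πstar - Jval P γ ρ (g i) (pc (θ k))) := by
          unfold JLag
          simp_rw [mul_sub]
          rw [Finset.sum_sub_distrib]
          ring
      _ = (1 - γ)⁻¹ * ∑ s, D s * ∑ a, πstar s a * Afun P γ r (pc (θ k)) s a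
          + ∑ i, lam k i * ((1 - γ)⁻¹
              * ∑ s, D s * ∑ a, πstar s a * Afun P γ (g i) (pc (θ k)) s a) := by
          rw [hr']
          congr 1
          exact Finset.sum_congr rfl fun i _ => by rw [hg' i]
      _ = (1 - γ)⁻¹ * (∑ s, D s * ∑ a, πstar s a * Afun P γ r (pc (θ k)) s a
          + ∑ i, lam k i * ∑ s, D s * ∑ a, πstar s a * Afun P γ (g i) (pc (θ k)) s a) := by
          rw [mul_add]
          congr 1
          rw [Finset.mul_sum]
          exact Finset.sum_congr rfl fun i _ => by ring
      _ = (1 - γ)⁻¹ * ∑ s, D s * ∑ a, πstar s a * ALag P γ r g (lam k) (pc (θ k)) s a := by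
          rw [swap]
          congr 1
          rw [← Finset.sum_add_distrib]
          refine Finset.sum_congr rfl fun s _ => ?_
          rw [expand s]
          ring
  -- Per-iterate bound
  have key : ∀ k, k < K →
      JLag P γ ρ r g (lam k) πstar - JLag P γ ρ r g (lam k) (pc (θ k))
        ≤ Real.sqrt εbias / (1 - γ) + M * η / 2 * ‖ω k‖ ^ 2 + G * ‖ω k - ωstar k‖
          + (1 / η) * ∑ s, D s * (F k s - F (k + 1) s) := by
    intro k hk
    set err : S → A → ℝ := fun s a =>
      (1 - γ) * ⟪gradLog pc (θ k) s a, ωstar k⟫ - ALag P γ r g (lam k) (pc (θ k)) s a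
      with herr
    set c : ℝ := M * η / 2 * ‖ω k‖ ^ 2 + G * ‖ω k - ωstar k‖ with hc
    set ΔL : S → A → ℝ := fun s a =>
      Real.log (pc (θ (k + 1)) s a) - Real.log (pc (θ k) s a) with hΔL
    -- pointwise bound
    have pointwise : ∀ s a, ALag P γ r g (lam k) (pc (θ k)) s a
        ≤ |err s a| + (1 - γ) * ((1 / η) * ΔL s a + c) := by
      intro s a
      have h1 : ⟪gradLog pc (θ k) s a, ω k⟫ ≤ (1 / η) * ΔL s a + M * η / 2 * ‖ω k‖ ^ 2 := by
        have hd := NPGaux.inner_grad_le (fun θ' => Real.log (pc θ' s a)) (hdiff s a) M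
          (fun x y => hM x y s a) (θ k) (η • ω k)
        rw [real_inner_smul_right] at hd
        rw [← hupd k hk] at hd
        have hnv : ‖η • ω k‖ ^ 2 = η ^ 2 * ‖ω k‖ ^ 2 := by
          rw [norm_smul, Real.norm_eq_abs, abs_of_pos hη, mul_pow]
        rw [hnv] at hd
        have hΔ : ΔL s a = Real.log (pc (θ (k + 1)) s a) - Real.log (pc (θ k) s a) := rfl
        have : ⟪gradLog pc (θ k) s a, ω k⟫
            ≤ (ΔL s a + M / 2 * (η ^ 2 * ‖ω k‖ ^ 2)) / η := by
          rw [le_div_iff₀ hη]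
          calc ⟪gradLog pc (θ k) s a, ω k⟫ * η
              = η * ⟪gradLog pc (θ k) s a, ω k⟫ := by ring
            _ ≤ _ := hd
            _ = ΔL s a + M / 2 * (η ^ 2 * ‖ω k‖ ^ 2) := by rw [hΔ]
        refine this.trans (le_of_eq ?_)
        field_simp
      have h2 : ⟪gradLog pc (θ k) s a, ωstar k - ω k⟫ ≤ G * ‖ω k - ωstar k‖ := by
        calc ⟪gradLog pc (θ k) s a, ωstar k - ω k⟫
            ≤ ‖gradLog pc (θ k) s a‖ * ‖ωstar k - ω k‖ := real_inner_le_norm _ _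
          _ ≤ G * ‖ωstar k - ω k‖ :=
              mul_le_mul_of_nonneg_right (hG _ s a) (norm_nonneg _)
          _ = G * ‖ω k - ωstar k‖ := by rw [norm_sub_rev]
      have h3 : ⟪gradLog pc (θ k) s a, ωstar k⟫
          = ⟪gradLog pc (θ k) s a, ω k⟫ + ⟪gradLog pc (θ k) s a, ωstar k - ω k⟫ := by
        rw [← inner_add_right]
        congr 1
        abel
      have h4 : ALag P γ r g (lam k) (pc (θ k)) s a
          = (1 - γ) * ⟪gradLog pc (θ k) s a, ωstar k⟫ - err s a := by
        rw [herr]; ring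
      have h5 : -err s a ≤ |err s a| := neg_le_abs _
      rw [h4, h3]
      have h6 : ⟪gradLog pc (θ k) s a, ω k⟫ + ⟪gradLog pc (θ k) s a, ωstar k - ω k⟫
          ≤ (1 / η) * ΔL s a + c := by
        rw [hc]
        calc ⟪gradLog pc (θ k) s a, ω k⟫ + ⟪gradLog pc (θ k) s a, ωstar k - ω k⟫
            ≤ ((1 / η) * ΔL s a + M * η / 2 * ‖ω k‖ ^ 2) + G * ‖ω k - ωstar k‖ :=
              add_le_add h1 h2
          _ = (1 / η) * ΔL s a + (M * η / 2 * ‖ω k‖ ^ 2 + G * ‖ω k - ωstar k‖) := by ring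
      nlinarith [mul_le_mul_of_nonneg_left h6 hγ'.le]
    -- weighted sums
    have hw0 : ∀ p : S × A, 0 ≤ D p.1 * πstar p.1 p.2 :=
      fun p => mul_nonneg (hD0 p.1) (hstar0 p.1 p.2)
    have hw1 : ∑ p : S × A, D p.1 * πstar p.1 p.2 = 1 := by
      rw [Fintype.sum_prod_type]
      calc ∑ s, ∑ a, D s * πstar s a = ∑ s, D s * ∑ a, πstar s a := by
            refine Finset.sum_congr rfl fun s _ => ?_
            rw [Finset.mul_sum]
        _ = ∑ s, D s := by
            refine Finset.sum_congr rfl fun s _ => ?_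
            rw [hstar1 s, mul_one]
        _ = 1 := hD1
    have hcs : ∑ s, D s * ∑ a, πstar s a * |err s a| ≤ Real.sqrt εbias := by
      have h := NPGaux.weighted_cs (fun p : S × A => D p.1 * πstar p.1 p.2)
        (fun p : S × A => err p.1 p.2) hw0 hw1
      have e1 : ∑ p : S × A, D p.1 * πstar p.1 p.2 * |err p.1 p.2|
          = ∑ s, D s * ∑ a, πstar s a * |err s a| := by
        rw [Fintype.sum_prod_type]
        refine Finset.sum_congr rfl fun s _ => ?_
        rw [Finset.mul_sum]
        refine Finset.sum_congr rfl fun a _ => ?_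
        ring
      have e2 : ∑ p : S × A, D p.1 * πstar p.1 p.2 * err p.1 p.2 ^ 2
          = ∑ s, D s * ∑ a, πstar s a * err s a ^ 2 := by
        rw [Fintype.sum_prod_type]
        refine Finset.sum_congr rfl fun s _ => ?_
        rw [Finset.mul_sum]
        refine Finset.sum_congr rfl fun a _ => ?_
        ring
      rw [e1, e2] at h
      refine h.trans (Real.sqrt_le_sqrt ?_)
      exact hbias k hk
    have hKL : ∀ s, ∑ a, πstar s a * ΔL s a = F k s - F (k + 1) s := by
      intro s
      have h := NPGaux.KL_diff (πstar s) (fun a => pc (θ k) s a)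
        (fun a => pc (θ (k + 1)) s a) (hstar0 s) (fun a => hpos _ s a) (fun a => hpos _ s a)
      show ∑ a, πstar s a * ΔL s a
        = KLdiv (πstar s) (fun a => pc (θ k) s a)
          - KLdiv (πstar s) (fun a => pc (θ (k + 1)) s a)
      rw [h]
    -- sum the pointwise bound
    have hsum : ∑ s, D s * ∑ a, πstar s a * ALag P γ r g (lam k) (pc (θ k)) s a
        ≤ ∑ s, D s * ∑ a, πstar s a * (|err s a| + (1 - γ) * ((1 / η) * ΔL s a + c)) := by
      refine Finset.sum_le_sum fun s _ => mul_le_mul_of_nonneg_left ?_ (hD0 s)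
      refine Finset.sum_le_sum fun a _ => ?_
      exact mul_le_mul_of_nonneg_left (pointwise s a) (hstar0 s a)
    have inner_eq : ∀ s, ∑ a, πstar s a * (|err s a| + (1 - γ) * ((1 / η) * ΔL s a + c))
        = (∑ a, πstar s a * |err s a|)
          + (1 - γ) * ((1 / η) * ∑ a, πstar s a * ΔL s a + c) := by
      intro s
      have e : ∀ a, πstar s a * (|err s a| + (1 - γ) * ((1 / η) * ΔL s a + c))
          = πstar s a * |err s a| + (1 - γ) * (1 / η) * (πstar s a * ΔL s a)
            + (1 - γ) * c * πstar s a := by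
        intro a; ring
      simp_rw [e]
      rw [Finset.sum_add_distrib, Finset.sum_add_distrib, ← Finset.mul_sum,
        ← Finset.mul_sum, hstar1 s, mul_one]
      ring
    have hterm : ∀ s, D s * ((∑ a, πstar s a * |err s a|)
          + (1 - γ) * ((1 / η) * ∑ a, πstar s a * ΔL s a + c))
        = D s * (∑ a, πstar s a * |err s a|)
          + (1 - γ) * (1 / η) * (D s * (F k s - F (k + 1) s)) + (1 - γ) * c * D s := by
      intro s
      rw [← hKL s]
      ring
    have hsplit : ∑ s, D s * ∑ a, πstar s a * (|err s a| + (1 - γ) * ((1 / η) * ΔL s a + c))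
        = (∑ s, D s * ∑ a, πstar s a * |err s a|)
          + (1 - γ) * ((1 / η) * ∑ s, D s * (F k s - F (k + 1) s) + c) := by
      simp_rw [inner_eq, hterm]
      rw [Finset.sum_add_distrib, Finset.sum_add_distrib, ← Finset.mul_sum,
        ← Finset.mul_sum, hD1, mul_one]
      ring
    -- combine
    have hB : ∑ s, D s * ∑ a, πstar s a * ALag P γ r g (lam k) (pc (θ k)) s a
        ≤ Real.sqrt εbias + (1 - γ) * ((1 / η) * ∑ s, D s * (F k s - F (k + 1) s) + c) :=
      hsum.trans (hsplit.le.trans (add_le_add_left hcs _))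
    rw [hpdlL k]
    have hinv : (0:ℝ) ≤ (1 - γ)⁻¹ := inv_nonneg.mpr hγ'.le
    calc (1 - γ)⁻¹ * ∑ s, D s * ∑ a, πstar s a * ALag P γ r g (lam k) (pc (θ k)) s a
        ≤ (1 - γ)⁻¹ * (Real.sqrt εbias
            + (1 - γ) * ((1 / η) * ∑ s, D s * (F k s - F (k + 1) s) + c)) :=
          mul_le_mul_of_nonneg_left hB hinv
      _ = Real.sqrt εbias / (1 - γ) + M * η / 2 * ‖ω k‖ ^ 2 + G * ‖ω k - ωstar k‖
          + (1 / η) * ∑ s, D s * (F k s - F (k + 1) s) := by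
          rw [hc]
          have hne : (1:ℝ) - γ ≠ 0 := ne_of_gt hγ'
          field_simp
          ring
  -- sum over iterations
  have total : ∑ k ∈ Finset.range K,
        (JLag P γ ρ r g (lam k) πstar - JLag P γ ρ r g (lam k) (pc (θ k)))
      ≤ ∑ k ∈ Finset.range K, (Real.sqrt εbias / (1 - γ) + M * η / 2 * ‖ω k‖ ^ 2
          + G * ‖ω k - ωstar k‖ + (1 / η) * ∑ s, D s * (F k s - F (k + 1) s)) :=
    Finset.sum_le_sum fun k hk => key k (Finset.mem_range.mp hk)
  have tele : ∑ k ∈ Finset.range K, ∑ s, D s * (F k s - F (k + 1) s)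
      = ∑ s, D s * (F 0 s - F K s) := by
    rw [Finset.sum_comm]
    refine Finset.sum_congr rfl fun s _ => ?_
    rw [← Finset.mul_sum, Finset.sum_range_sub' (fun k => F k s)]
  have rhs_eq : ∑ k ∈ Finset.range K, (Real.sqrt εbias / (1 - γ) + M * η / 2 * ‖ω k‖ ^ 2
          + G * ‖ω k - ωstar k‖ + (1 / η) * ∑ s, D s * (F k s - F (k + 1) s))
      = (K : ℝ) * (Real.sqrt εbias / (1 - γ)) + M * η / 2 * ∑ k ∈ Finset.range K, ‖ω k‖ ^ 2
        + G * ∑ k ∈ Finset.range K, ‖ω k - ωstar k‖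
        + (1 / η) * ∑ s, D s * (F 0 s - F K s) := by
    rw [Finset.sum_add_distrib, Finset.sum_add_distrib, Finset.sum_add_distrib,
      Finset.sum_const, ← Finset.mul_sum, ← Finset.mul_sum, ← Finset.mul_sum, tele]
    simp [nsmul_eq_mul]
  have hF0K : ∑ s, D s * (F 0 s - F K s)
      = ∑ s, D s * (KLdiv (πstar s) (fun a => pc (θ 0) s a)
          - KLdiv (πstar s) (fun a => pc (θ K) s a)) := rfl
  calc (1 / (K : ℝ)) * ∑ k ∈ Finset.range K,
        (JLag P γ ρ r g (lam k) πstar - JLag P γ ρ r g (lam k) (pc (θ k)))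
      ≤ (1 / (K : ℝ)) * ((K : ℝ) * (Real.sqrt εbias / (1 - γ))
          + M * η / 2 * ∑ k ∈ Finset.range K, ‖ω k‖ ^ 2
          + G * ∑ k ∈ Finset.range K, ‖ω k - ωstar k‖
          + (1 / η) * ∑ s, D s * (F 0 s - F K s)) := by
        refine mul_le_mul_of_nonneg_left (total.trans_eq rhs_eq) ?_
        positivity
    _ = Real.sqrt εbias / (1 - γ)
        + (M * η / (2 * (K : ℝ))) * ∑ k ∈ Finset.range K, ‖ω k‖ ^ 2
        + (G / (K : ℝ)) * ∑ k ∈ Finset.range K, ‖ω k - ωstar k‖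
        + (1 / (η * (K : ℝ))) * ∑ s, D s *
            (KLdiv (πstar s) (fun a => pc (θ 0) s a) -
             KLdiv (πstar s) (fun a => pc (θ K) s a)) := by
        rw [hF0K]
        have hKne : (K : ℝ) ≠ 0 := ne_of_gt hKpos
        have hηne : η ≠ 0 := ne_of_gt hη
        field_simp
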